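/- In the two-group measurement-error model without group information, the expected residual for group g=0 equals (P[g=0] - 1)(Λβ)^T Δμ_z, where Δμ_z = E[z | g=1] - E[z | g=0] and Λ = (Σ_z + Σ_u)^{-1}Σ_u, for the population least-squares predictor of y from x = z + u. -/

import Mathlib

open MeasureTheory ProbabilityTheory Matrix

/-- Mean vector of a random vector. -/
noncomputable def meanV {Ω : Type*} [MeasurableSpace Ω] (P : Measure Ω) {d : ℕ}
    (z : Ω → Fin d → ℝ) : Fin d → ℝ := fun i => ∫ ω, z ω i ∂P

/-- Covariance matrix of a random vector. -/
noncomputable def covM {Ω : Type*} [MeasurableSpace Ω] (P : Measure Ω) {d : ℕ}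
    (z : Ω → Fin d → ℝ) : Matrix (Fin d) (Fin d) ℝ :=
  Matrix.of fun i j => ∫ ω, (z ω i - meanV P z i) * (z ω j - meanV P z j) ∂P

/-- Two-group measurement-error model without group information: the expected
residual for group `g = 0` equals `(P[g=0] - 1)(Λβ)ᵀΔμ_z`. -/
theorem stmt_4 {Ω : Type*} [MeasurableSpace Ω] (P : Measure Ω) [IsProbabilityMeasure P]
    {d : ℕ} (z u x : Ω → Fin d → ℝ) (g y yhat : Ω → ℝ) (β : Fin d → ℝ) (α : ℝ)
    (Λ : Matrix (Fin d) (Fin d) ℝ) (Δμz : Fin d → ℝ)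
    (hgval : ∀ ω, g ω = 0 ∨ g ω = 1)
    (hgmeas : Measurable g)
    (hppos : 0 < P (g ⁻¹' {1}) ∧ P (g ⁻¹' {1}) < 1)
    (hx : ∀ ω, x ω = fun i => z ω i + u ω i)
    (hy : ∀ ω, y ω = β ⬝ᵥ z ω + α)
    (hindep : IndepFun (fun ω => (z ω, g ω)) u P)
    (hzL2 : ∀ i, MemLp (fun ω => z ω i) 2 P)
    (huL2 : ∀ i, MemLp (fun ω => u ω i) 2 P)
    (hu0 : ∀ i, ∫ ω, u ω i ∂P = 0)
    (hinv : IsUnit (covM P z + covM P u).det)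
    (hΛ : Λ = (covM P z + covM P u)⁻¹ * covM P u)
    (hΔ : ∀ i, Δμz i = (∫ ω, z ω i ∂(ProbabilityTheory.cond P (g ⁻¹' {1}))) -
      ∫ ω, z ω i ∂(ProbabilityTheory.cond P (g ⁻¹' {0})))
    (hyhat : ∀ ω, yhat ω = ((1 - Λ) *ᵥ β) ⬝ᵥ x ω + (Λ *ᵥ β) ⬝ᵥ meanV P z + α) :
    ∫ ω, (y ω - yhat ω) ∂(ProbabilityTheory.cond P (g ⁻¹' {0})) =
      ((P (g ⁻¹' {0})).toReal - 1) * ((Λ *ᵥ β) ⬝ᵥ Δμz) := by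
  classical
  set A : Set Ω := g ⁻¹' {0} with hA
  set B : Set Ω := g ⁻¹' {1} with hB
  have hBmeas : MeasurableSet B := hgmeas (measurableSet_singleton 1)
  have hAB : A = Bᶜ := by
    ext ω; rcases hgval ω with h | h <;> simp [hA, hB, h]
  have hAmeas : MeasurableSet A := hAB ▸ hBmeas.compl
  have hPA : P A = 1 - P B := by rw [hAB, prob_compl_eq_one_sub hBmeas]
  have hPAne : P A ≠ 0 := by
    rw [hPA]
    simp only [ne_eq, tsub_eq_zero_iff_le, not_le]
    exact hppos.2
  have hPBne : P B ≠ 0 := hppos.1.ne'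
  have hPAtop : P A ≠ ⊤ := measure_ne_top P A
  have hPBtop : P B ≠ ⊤ := measure_ne_top P B
  have hsum : (P A).toReal + (P B).toReal = 1 := by
    rw [← ENNReal.toReal_add hPAtop hPBtop, hAB, add_comm, prob_add_prob_compl hBmeas,
      ENNReal.toReal_one]
  set p0 := (P A).toReal with hp0
  set p1 := (P B).toReal with hp1
  have hp0ne : p0 ≠ 0 := ENNReal.toReal_ne_zero.2 ⟨hPAne, hPAtop⟩
  have hp1ne : p1 ≠ 0 := ENNReal.toReal_ne_zero.2 ⟨hPBne, hPBtop⟩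
  -- cond integral formula
  have hcondint : ∀ (S : Set Ω) (f : Ω → ℝ),
      ∫ ω, f ω ∂(ProbabilityTheory.cond P S) = (P S).toReal⁻¹ * ∫ ω in S, f ω ∂P := by
    intro S f
    rw [ProbabilityTheory.cond, integral_smul_measure, ENNReal.toReal_inv, smul_eq_mul]
  -- integrability
  have hzint : ∀ i, Integrable (fun ω => z ω i) P := fun i => (hzL2 i).integrable one_le_two
  have huint : ∀ i, Integrable (fun ω => u ω i) P := fun i => (huL2 i).integrable one_le_two
  have hcondi : ∀ (S : Set Ω) (f : Ω → ℝ), P S ≠ 0 → Integrable f P →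
      Integrable f (ProbabilityTheory.cond P S) := by
    intro S f hS hf
    rw [ProbabilityTheory.cond]
    exact (hf.restrict).smul_measure (ENNReal.inv_ne_top.2 hS)
  -- independence: group indicator vs u i
  have hEu0 : ∀ i, ∫ ω in A, u ω i ∂P = 0 := by
    intro i
    have hgu : IndepFun g (fun ω => u ω i) P := by
      have := hindep.comp (measurable_snd : Measurable (Prod.snd : (Fin d → ℝ) × ℝ → ℝ))
        (measurable_pi_apply i)
      exact this
    set φ : ℝ → ℝ := Set.indicator {0} (fun _ => 1) with hφ
    have hφmeas : Measurable φ := measurable_const.indicator (measurableSet_singleton 0)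
    have hind2 : IndepFun (φ ∘ g) (fun ω => u ω i) P := hgu.comp hφmeas measurable_id
    have hφg : φ ∘ g = A.indicator (fun _ => (1 : ℝ)) := by
      funext ω
      by_cases h : g ω = 0 <;> simp [hφ, Set.indicator, hA, h]
    have hφint : Integrable (φ ∘ g) P := by
      rw [hφg]; exact (integrable_const (1 : ℝ)).indicator hAmeas
    have hmul := hind2.integral_mul_eq_mul_integral hφint.aestronglyMeasurable (huint i).aestronglyMeasurable
    rw [hu0 i, mul_zero] at hmul
    have : (fun ω => A.indicator (fun ω => u ω i) ω) = (φ ∘ g) * (fun ω => u ω i) := by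
      funext ω
      by_cases h : ω ∈ A <;> simp [hφg, Set.indicator, h]
    rw [← integral_indicator hAmeas, this, hmul]
  -- law of total expectation per coordinate
  set E0 : Fin d → ℝ := fun i => ∫ ω, z ω i ∂(ProbabilityTheory.cond P A) with hE0
  set E1 : Fin d → ℝ := fun i => ∫ ω, z ω i ∂(ProbabilityTheory.cond P B) with hE1
  have hmean : ∀ i, meanV P z i = p0 * E0 i + p1 * E1 i := by
    intro i
    have h0 : ∫ ω in A, z ω i ∂P = p0 * E0 i := by
      have h := hcondint A (fun ω => z ω i)
      rw [show E0 i = ∫ ω, z ω i ∂(ProbabilityTheory.cond P A) from rfl, h]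
      field_simp
      exact (mul_div_cancel_right₀ _ hp0ne).symm
    have h1 : ∫ ω in B, z ω i ∂P = p1 * E1 i := by
      have h := hcondint B (fun ω => z ω i)
      rw [show E1 i = ∫ ω, z ω i ∂(ProbabilityTheory.cond P B) from rfl, h]
      field_simp
      exact (mul_div_cancel_right₀ _ hp1ne).symm
    have htot := integral_add_compl hAmeas (hzint i)
    have hABc : Aᶜ = B := by rw [hAB, compl_compl]
    rw [hABc, h0, h1] at htot
    rw [show meanV P z i = ∫ ω, z ω i ∂P from rfl, ← htot]
  -- conditional mean of u is zero
  have hu0cond : ∀ i, ∫ ω, u ω i ∂(ProbabilityTheory.cond P A) = 0 := by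
    intro i
    rw [hcondint A, hEu0 i, mul_zero]
  -- probability measure instance on the conditional measure
  haveI : IsProbabilityMeasure (ProbabilityTheory.cond P A) :=
    cond_isProbabilityMeasure hPAne
  -- rewrite the residual
  set c : Fin d → ℝ := Λ *ᵥ β with hc
  have hdvec : (1 - Λ) *ᵥ β = fun i => β i - c i := by
    rw [Matrix.sub_mulVec, Matrix.one_mulVec]
    rfl
  have hres : ∀ ω, y ω - yhat ω =
      ∑ i, (c i * z ω i - (β i - c i) * u ω i - c i * meanV P z i) := by
    intro ω
    rw [hy ω, hyhat ω, hx ω, hdvec]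
    simp only [dotProduct]
    rw [Finset.sum_sub_distrib, Finset.sum_sub_distrib]
    have : ∑ i, (β i - c i) * ((fun i => z ω i + u ω i) i) =
        (∑ i, β i * z ω i) - (∑ i, c i * z ω i) + ∑ i, (β i - c i) * u ω i := by
      rw [← Finset.sum_sub_distrib, ← Finset.sum_add_distrib]
      exact Finset.sum_congr rfl fun i _ => by ring
    rw [this]
    ring
  -- integrate
  have hterm : ∀ i : Fin d, Integrable
      (fun ω => c i * z ω i - (β i - c i) * u ω i - c i * meanV P z i)
      (ProbabilityTheory.cond P A) := by
    intro i
    exact (((hcondi A _ hPAne (hzint i)).const_mul (c i)).sub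
      ((hcondi A _ hPAne (huint i)).const_mul (β i - c i))).sub (integrable_const _)
  have hint : ∫ ω, (y ω - yhat ω) ∂(ProbabilityTheory.cond P A) =
      ∑ i, (c i * E0 i - (β i - c i) * 0 - c i * (p0 * E0 i + p1 * E1 i)) := by
    calc ∫ ω, (y ω - yhat ω) ∂(ProbabilityTheory.cond P A)
        = ∫ ω, (∑ i, (c i * z ω i - (β i - c i) * u ω i - c i * meanV P z i))
            ∂(ProbabilityTheory.cond P A) := by
          exact integral_congr_ae (Filter.Eventually.of_forall hres)
      _ = ∑ i, ∫ ω, (c i * z ω i - (β i - c i) * u ω i - c i * meanV P z i)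
            ∂(ProbabilityTheory.cond P A) := by
          exact integral_finset_sum _ fun i _ => hterm i
      _ = ∑ i, (c i * E0 i - (β i - c i) * 0 - c i * (p0 * E0 i + p1 * E1 i)) := by
          refine Finset.sum_congr rfl fun i _ => ?_
          have hz' : Integrable (fun ω => c i * z ω i) (ProbabilityTheory.cond P A) :=
            (hcondi A _ hPAne (hzint i)).const_mul _
          have hu' : Integrable (fun ω => (β i - c i) * u ω i)
              (ProbabilityTheory.cond P A) := (hcondi A _ hPAne (huint i)).const_mul _
          have hfg : Integrable (fun ω => c i * z ω i - (β i - c i) * u ω i)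
              (ProbabilityTheory.cond P A) := hz'.sub hu'
          rw [integral_sub hfg (integrable_const _), integral_sub hz' hu',
            integral_const_mul, integral_const_mul, integral_const, probReal_univ,
            one_smul, hu0cond i, hmean i]
  rw [hint]
  -- final algebra
  have hΔ' : ∀ i, Δμz i = E1 i - E0 i := hΔ
  have hp1' : p1 = 1 - p0 := by linarith
  simp only [dotProduct]
  rw [Finset.mul_sum]
  refine Finset.sum_congr rfl fun i _ => ?_
  rw [hΔ' i, hp1']
  ring
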